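/- Let T : X → X be a compact positive operator on X = L^∞(Ω) such that for every nonzero f ≥ 0, T f is continuous on Ω̄ and bounded below by a positive constant. If λ ≠ r(T) is an eigenvalue of T with eigenvector w, then w cannot satisfy w ≥ 0 a.e. and w ≠ 0 (no eigenvalue other than the spectral radius has a nonnegative nonzero eigenvector). -/

import Mathlib

open MeasureTheory Filter ENNReal NNReal

set_option maxHeartbeats 1000000

/-- Uniqueness part of the Krein–Rutman theorem on `X = L^∞(Ω)`: let `T` be a compact
positive operator which is strictly positive in the sense that it maps every nonzero
`f ≥ 0` into the interior of the cone `C` of a.e.-nonnegative functions (for each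
nonzero `f ≥ 0`, `Tf` is continuous on `Ω̄` and bounded below by a positive constant,
hence an interior point of `C`).  If `λ ≠ r(T)` is an eigenvalue of `T` with eigenvector
`w`, then `w` cannot be nonnegative a.e. and nonzero. -/
theorem krein_rutman_uniqueness
    {α : Type*} [MeasurableSpace α] (μ : Measure α)
    (T : Lp ℝ ⊤ μ →L[ℝ] Lp ℝ ⊤ μ) (hTcomp : IsCompactOperator T)
    (C : Set (Lp ℝ ⊤ μ)) (hC : C = {w : Lp ℝ ⊤ μ | 0 ≤ w})
    (hsolid : (interior C).Nonempty)
    (hTpos : ∀ f ∈ C, f ≠ 0 → T f ∈ interior C)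
    (lam : ℝ) (hlam : lam ≠ (spectralRadius ℝ T).toReal)
    (w : Lp ℝ ⊤ μ) (hw : T w = lam • w) :
    ¬(w ∈ C ∧ w ≠ 0) := by
  subst hC
  rintro ⟨hwC, hw0⟩
  have hwnn : (0 : Lp ℝ ⊤ μ) ≤ w := hwC
  -- nonnegative scalar multiples of nonnegative functions are nonnegative
  have hsmul : ∀ (c : ℝ), 0 ≤ c → ∀ f : Lp ℝ ⊤ μ, 0 ≤ f → 0 ≤ c • f := by
    intro c hc f hf
    rw [← Lp.coeFn_nonneg] at hf ⊢
    filter_upwards [hf, Lp.coeFn_smul c f] with x hx h2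
    simp only [h2, Pi.smul_apply, smul_eq_mul, Pi.zero_apply] at *
    exact mul_nonneg hc hx
  -- T preserves the cone
  have hTC : ∀ f : Lp ℝ ⊤ μ, 0 ≤ f → 0 ≤ T f := by
    intro f hf
    by_cases h : f = 0
    · simp [h]
    · exact interior_subset (s := {v : Lp ℝ ⊤ μ | 0 ≤ v}) (hTpos f hf h)
  have hTmono : ∀ f g : Lp ℝ ⊤ μ, f ≤ g → T f ≤ T g := by
    intro f g h
    have := hTC (g - f) (sub_nonneg.mpr h)
    rw [map_sub] at this
    exact sub_nonneg.mp this
  have hTwi : T w ∈ interior {v : Lp ℝ ⊤ μ | 0 ≤ v} := hTpos w hwC hw0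
  have hTw0 : (0 : Lp ℝ ⊤ μ) ≤ lam • w := hw ▸ interior_subset (s := {v : Lp ℝ ⊤ μ | 0 ≤ v}) hTwi
  -- lam is positive
  have hlam_pos : 0 < lam := by
    rcases lt_trichotomy lam 0 with h | h | h
    · exfalso
      apply hw0
      have h1 : 0 ≤ (-lam)⁻¹ • (lam • w) := hsmul _ (inv_nonneg.mpr (by linarith)) _ hTw0
      rw [smul_smul] at h1
      have hval : (-lam)⁻¹ * lam = -1 := by rw [inv_neg, neg_mul, inv_mul_cancel₀ h.ne]
      rw [hval, neg_smul, one_smul] at h1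
      have h2 : w ≤ 0 := by simpa using neg_nonneg.mp (by simpa using h1)
      exact le_antisymm h2 hwnn
    · exfalso
      subst h
      rw [zero_smul] at hw
      have h0 : (0 : Lp ℝ ⊤ μ) ∈ interior {v : Lp ℝ ⊤ μ | 0 ≤ v} := hw ▸ hTwi
      obtain ⟨ε, hε, hball⟩ := Metric.mem_nhds_iff.mp (mem_interior_iff_mem_nhds.mp h0)
      set δ : ℝ := ε / (2 * (‖w‖ + 1)) with hδ
      have hδpos : 0 < δ := by positivity
      have hmem : -(δ • w) ∈ Metric.ball (0 : Lp ℝ ⊤ μ) ε := by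
        rw [Metric.mem_ball, dist_zero_right, norm_neg, norm_smul, Real.norm_eq_abs,
          abs_of_pos hδpos]
        have h1 : ‖w‖ < ‖w‖ + 1 := by linarith
        calc δ * ‖w‖ ≤ δ * (‖w‖ + 1) := by nlinarith [norm_nonneg w]
          _ = ε / 2 := by rw [hδ]; field_simp
          _ < ε := by linarith
      have h1 : (0 : Lp ℝ ⊤ μ) ≤ -(δ • w) := hball hmem
      have h2 : (0 : Lp ℝ ⊤ μ) ≤ δ • w := hsmul _ hδpos.le _ hwnn
      have h3 : δ • w = 0 := le_antisymm (by simpa using neg_nonneg.mp (by simpa using h1)) h2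
      exact hw0 (by simpa [hδpos.ne'] using (smul_eq_zero.mp h3))
    · exact h
  -- get a ball around w inside the cone
  obtain ⟨ε₀, hε₀, hball₀⟩ := Metric.mem_nhds_iff.mp (mem_interior_iff_mem_nhds.mp (hw ▸ hTwi))
  set ε : ℝ := ε₀ / lam with hεdef
  have hε : 0 < ε := by positivity
  have hball : Metric.ball w ε ⊆ {v : Lp ℝ ⊤ μ | 0 ≤ v} := by
    intro y hy
    have h1 : lam • y ∈ Metric.ball (lam • w) ε₀ := by
      rw [Metric.mem_ball] at hy ⊢
      rw [dist_eq_norm, ← smul_sub, norm_smul, Real.norm_eq_abs, abs_of_pos hlam_pos]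
      rw [dist_eq_norm] at hy
      calc lam * ‖y - w‖ < lam * ε := by nlinarith
        _ = ε₀ := by rw [hεdef]; field_simp
    have h2 : (0 : Lp ℝ ⊤ μ) ≤ lam • y := hball₀ h1
    have h3 : 0 ≤ lam⁻¹ • (lam • y) := hsmul _ (inv_nonneg.mpr hlam_pos.le) _ h2
    rwa [smul_smul, inv_mul_cancel₀ hlam_pos.ne', one_smul] at h3
  -- iterates of T on w
  have hTnw : ∀ n : ℕ, (T ^ n) w = lam ^ n • w := by
    intro n
    induction n with
    | zero => simp
    | succ n ih =>
      rw [pow_succ, ContinuousLinearMap.mul_apply, hw, ContinuousLinearMap.map_smul, ih, smul_smul, mul_comm, ← pow_succ]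
  -- the key norm estimate
  have key : ∀ (n : ℕ) (u : Lp ℝ ⊤ μ), ‖u‖ < ε → ‖(T ^ n) u‖ ≤ lam ^ n * ‖w‖ := by
    intro n u hu
    have hle : u ≤ w := by
      have hm : w - u ∈ Metric.ball w ε := by
        rw [Metric.mem_ball, dist_eq_norm]; simpa using hu
      exact sub_nonneg.mp (hball hm)
    have hge : -w ≤ u := by
      have hm : w + u ∈ Metric.ball w ε := by
        rw [Metric.mem_ball, dist_eq_norm]; simpa using hu
      have h1 : (0 : Lp ℝ ⊤ μ) ≤ w + u := hball hm
      have h2 : (0 : Lp ℝ ⊤ μ) ≤ u - (-w) := by rwa [sub_neg_eq_add, add_comm]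
      exact sub_nonneg.mp h2
    have hsand : ∀ m : ℕ, -(lam ^ m • w) ≤ (T ^ m) u ∧ (T ^ m) u ≤ lam ^ m • w := by
      intro m
      induction m with
      | zero => simpa using ⟨hge, hle⟩
      | succ m ih =>
        constructor
        · have h1 : T (-(lam ^ m • w)) ≤ T ((T ^ m) u) := hTmono _ _ ih.1
          rw [map_neg, ContinuousLinearMap.map_smul, hw, smul_smul, ← pow_succ] at h1
          rwa [pow_succ' T m, ContinuousLinearMap.mul_apply]
        · have h1 : T ((T ^ m) u) ≤ T (lam ^ m • w) := hTmono _ _ ih.2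
          rw [ContinuousLinearMap.map_smul, hw, smul_smul, ← pow_succ] at h1
          rwa [pow_succ' T m, ContinuousLinearMap.mul_apply]
    have habs : |(T ^ n) u| ≤ |lam ^ n • w| := by
      rw [abs_of_nonneg (hsmul _ (pow_nonneg hlam_pos.le n) _ hwnn)]
      exact abs_le'.mpr ⟨(hsand n).2, neg_le.mp (hsand n).1⟩
    calc ‖(T ^ n) u‖ ≤ ‖lam ^ n • w‖ := norm_le_norm_of_abs_le_abs habs
      _ = lam ^ n * ‖w‖ := by
        rw [norm_smul, Real.norm_eq_abs, abs_of_nonneg (pow_nonneg hlam_pos.le n)]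
  -- operator norm bound
  have hTn : ∀ n : ℕ, ‖T ^ n‖ ≤ 2 / ε * ‖w‖ * lam ^ n := by
    intro n
    apply ContinuousLinearMap.opNorm_le_bound _ (by positivity)
    intro f
    by_cases hf : f = 0
    · simp [hf]
    · have hfn : 0 < ‖f‖ := norm_pos_iff.mpr hf
      set c : ℝ := ε / (2 * ‖f‖) with hcdef
      have hc : 0 < c := by positivity
      have hcu : ‖c • f‖ < ε := by
        rw [norm_smul, Real.norm_eq_abs, abs_of_pos hc, hcdef]
        rw [div_mul_eq_mul_div, mul_comm]
        rw [div_lt_iff₀ (by positivity)]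
        nlinarith
      have h1 := key n (c • f) hcu
      rw [ContinuousLinearMap.map_smul, norm_smul, Real.norm_eq_abs, abs_of_pos hc] at h1
      have h2 : ‖(T ^ n) f‖ ≤ c⁻¹ * (lam ^ n * ‖w‖) := by
        rw [← mul_le_mul_iff_right₀ hc, ← mul_assoc, mul_inv_cancel₀ hc.ne', one_mul]
        exact h1
      calc ‖(T ^ n) f‖ ≤ c⁻¹ * (lam ^ n * ‖w‖) := h2
        _ = 2 / ε * ‖w‖ * lam ^ n * ‖f‖ := by
          rw [hcdef]
          field_simp
  -- lam is in the spectrum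
  have hspec : lam ∈ spectrum ℝ T := by
    rw [spectrum.mem_iff]
    intro hunit
    obtain ⟨u, hu⟩ := hunit
    apply hw0
    have h1 : (algebraMap ℝ (Lp ℝ ⊤ μ →L[ℝ] Lp ℝ ⊤ μ) lam - T) w = 0 := by
      rw [ContinuousLinearMap.sub_apply, Algebra.algebraMap_eq_smul_one, hw]
      simp
    have h2 : ((u⁻¹ : (Lp ℝ ⊤ μ →L[ℝ] Lp ℝ ⊤ μ)ˣ) : Lp ℝ ⊤ μ →L[ℝ] Lp ℝ ⊤ μ)
        (((u : (Lp ℝ ⊤ μ →L[ℝ] Lp ℝ ⊤ μ)ˣ) : Lp ℝ ⊤ μ →L[ℝ] Lp ℝ ⊤ μ) w) = w := by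
      rw [← ContinuousLinearMap.mul_apply, u.inv_mul, ContinuousLinearMap.one_apply]
    rw [hu, h1, map_zero] at h2
    exact h2.symm
  have hlamle : (‖lam‖₊ : ℝ≥0∞) ≤ spectralRadius ℝ T := by
    unfold spectralRadius
    exact le_iSup₂ (f := fun k (_ : k ∈ spectrum ℝ T) => (‖k‖₊ : ℝ≥0∞)) lam hspec
  set M : ℝ := 2 / ε * ‖w‖ with hM
  have hM0 : 0 ≤ M := by positivity
  set K : ℝ≥0∞ := ENNReal.ofReal M with hK
  set L : ℝ≥0∞ := ENNReal.ofReal lam with hL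
  have hKtop : K ≠ ⊤ := ENNReal.ofReal_ne_top
  have hTnE : ∀ n : ℕ, (‖T ^ n‖₊ : ℝ≥0∞) ≤ K * L ^ n := by
    intro n
    rw [← ENNReal.ofReal_coe_nnreal, coe_nnnorm]
    calc ENNReal.ofReal ‖T ^ n‖ ≤ ENNReal.ofReal (M * lam ^ n) :=
          ENNReal.ofReal_le_ofReal (hTn n)
      _ = K * L ^ n := by rw [ENNReal.ofReal_mul hM0, ENNReal.ofReal_pow hlam_pos.le]
  have hsr : spectralRadius ℝ T ≤ L := by
    refine le_trans (spectrum.spectralRadius_le_liminf_pow_nnnorm_pow_one_div ℝ T) ?_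
    have hbound : ∀ δ : ℝ≥0∞, 1 < δ →
        Filter.atTop.liminf (fun n : ℕ => (‖T ^ n‖₊ : ℝ≥0∞) ^ (1 / n : ℝ)) ≤ δ * L := by
      intro δ hδ
      have hev : ∀ᶠ n : ℕ in Filter.atTop, (‖T ^ n‖₊ : ℝ≥0∞) ^ (1 / n : ℝ) ≤ δ * L := by
        filter_upwards [ENNReal.eventually_pow_one_div_le hKtop hδ,
          Filter.eventually_gt_atTop 0] with n hn hn0
        calc (‖T ^ n‖₊ : ℝ≥0∞) ^ (1 / n : ℝ) ≤ (K * L ^ n) ^ (1 / n : ℝ) :=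
              ENNReal.rpow_le_rpow (hTnE n) (by positivity)
          _ = K ^ (1 / n : ℝ) * L := by
              rw [ENNReal.mul_rpow_of_nonneg _ _ (by positivity), ← ENNReal.rpow_natCast L,
                ← ENNReal.rpow_mul]
              congr 1
              field_simp
              exact ENNReal.rpow_one L
          _ ≤ δ * L := mul_le_mul_left hn L
      exact Filter.liminf_le_of_frequently_le' hev.frequently
    refine ENNReal.le_of_forall_lt_one_mul_le fun a ha => ?_
    by_cases ha0 : a = 0
    · simp [ha0]
    · have h1 : (1 : ℝ≥0∞) < a⁻¹ := ENNReal.one_lt_inv.mpr ha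
      calc a * Filter.atTop.liminf (fun n : ℕ => (‖T ^ n‖₊ : ℝ≥0∞) ^ (1 / n : ℝ))
          ≤ a * (a⁻¹ * L) := mul_le_mul_right (hbound a⁻¹ h1) a
        _ = L := by rw [← mul_assoc, ENNReal.mul_inv_cancel ha0 (ha.trans_le le_top).ne, one_mul]
  have heq : spectralRadius ℝ T = L := by
    refine le_antisymm hsr ?_
    rw [hL, ← Real.enorm_eq_ofReal hlam_pos.le]
    exact hlamle
  exact hlam (by rw [heq, hL, ENNReal.toReal_ofReal hlam_pos.le])
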